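/- If T is a complete routing table and r is a new entry, then the table obtained by adding to T the entry r together with all intersections r ∩ r' for r' ∈ T in conflict with r is again complete. -/
import Mathlib


/-- Two entries (identified with the sets of address pairs they match)
    conflict when they intersect and neither contains the other. -/
def Conflict {α : Type*} (r r' : Set α) : Prop :=
  (r ∩ r').Nonempty ∧ ¬ r ⊆ r' ∧ ¬ r' ⊆ r

/-- Completeness: every nonempty pairwise intersection of entries is an entry. -/
def Complete {α : Type*} (T : Set (Set α)) : Prop :=
  ∀ r₁ ∈ T, ∀ r₂ ∈ T, (r₁ ∩ r₂).Nonempty → r₁ ∩ r₂ ∈ T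

/-- Adding to a complete table a new entry `r` together with the intersections
    `r ∩ r'` for every entry `r'` in conflict with `r` yields a complete table. -/
theorem stmt12 {α : Type*} (T : Set (Set α)) (hfin : T.Finite)
    (hT : Complete T) (r : Set α) :
    Complete (T ∪ {r} ∪ {t | ∃ r' ∈ T, Conflict r r' ∧ t = r ∩ r'}) := by
  set U := T ∪ {r} ∪ {t | ∃ r' ∈ T, Conflict r r' ∧ t = r ∩ r'} with hU
  have key : ∀ s ∈ T, (r ∩ s).Nonempty → r ∩ s ∈ U := by
    intro s hs hne
    by_cases h1 : s ⊆ r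
    · have : r ∩ s = s := by rw [Set.inter_eq_right]; exact h1
      rw [this]; exact Or.inl (Or.inl hs)
    by_cases h2 : r ⊆ s
    · have : r ∩ s = r := by rw [Set.inter_eq_left]; exact h2
      rw [this]; exact Or.inl (Or.inr rfl)
    · exact Or.inr ⟨s, hs, ⟨hne, h2, h1⟩, rfl⟩
  intro r₁ h₁ r₂ h₂ hne
  rcases h₁ with (h₁ | h₁) | h₁
  · rcases h₂ with (h₂ | h₂) | h₂
    · exact Or.inl (Or.inl (hT r₁ h₁ r₂ h₂ hne))
    · simp only [Set.mem_singleton_iff] at h₂; subst h₂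
      rw [Set.inter_comm] at hne ⊢
      exact key r₁ h₁ hne
    · obtain ⟨r', hr', hc, rfl⟩ := h₂
      have heq : r₁ ∩ (r ∩ r') = r ∩ (r₁ ∩ r') := by
        ext x; simp [and_comm, and_assoc, and_left_comm]
      rw [heq] at hne ⊢
      have hne' : (r₁ ∩ r').Nonempty :=
        hne.mono (Set.inter_subset_right)
      exact key _ (hT r₁ h₁ r' hr' hne') hne
  · simp only [Set.mem_singleton_iff] at h₁; rw [h₁] at hne ⊢
    rcases h₂ with (h₂ | h₂) | h₂
    · exact key r₂ h₂ hne
    · simp only [Set.mem_singleton_iff] at h₂; rw [h₂] at hne ⊢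
      rw [Set.inter_self]; exact Or.inl (Or.inr rfl)
    · obtain ⟨r', hr', hc, rfl⟩ := h₂
      have : r ∩ (r ∩ r') = r ∩ r' := by
        rw [← Set.inter_assoc, Set.inter_self]
      rw [this]; exact Or.inr ⟨r', hr', hc, rfl⟩
  · obtain ⟨r', hr', hc, rfl⟩ := h₁
    rcases h₂ with (h₂ | h₂) | h₂
    · have heq : (r ∩ r') ∩ r₂ = r ∩ (r' ∩ r₂) := Set.inter_assoc _ _ _
      rw [heq] at hne ⊢
      have hne' : (r' ∩ r₂).Nonempty := hne.mono (Set.inter_subset_right)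
      exact key _ (hT r' hr' r₂ h₂ hne') hne
    · simp only [Set.mem_singleton_iff] at h₂; rw [h₂] at hne ⊢
      have : (r ∩ r') ∩ r = r ∩ r' := by
        ext x; simp [and_comm, and_assoc, and_left_comm]
      rw [this]; exact Or.inr ⟨r', hr', hc, rfl⟩
    · obtain ⟨r'', hr'', hc', rfl⟩ := h₂
      have heq : (r ∩ r') ∩ (r ∩ r'') = r ∩ (r' ∩ r'') := by
        ext x; simp; tauto
      rw [heq] at hne ⊢
      have hne' : (r' ∩ r'').Nonempty := hne.mono (Set.inter_subset_right)
      exact key _ (hT r' hr' r'' hr'' hne') hne
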